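/- Let X ⊆ {0,1}^ℤ be a measure-theoretically subordinate subshift with base measure ν. Then X is a sandwich measure-theoretically subordinate subshift for which δ_𝟎 ⊗ ν is a base measure, where δ_𝟎 is the point mass at the all-zeros sequence. -/

import Mathlib

open MeasureTheory Filter Topology

/-- The full shift space `{0,1}^ℤ`, with `Bool` playing the role of `{0,1}`
(`false` ↔ `0`, `true` ↔ `1`). -/
abbrev BinSeq : Type := ℤ → Bool

/-- The left shift `σ`. -/
def shift : BinSeq → BinSeq := fun x n => x (n + 1)

/-- The product shift `σ × σ`. -/
def shift2 : BinSeq × BinSeq → BinSeq × BinSeq := Prod.map shift shift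

/-- The product shift `σ × σ × σ` on triples `((w,x),y)`. -/
def shift3 : (BinSeq × BinSeq) × BinSeq → (BinSeq × BinSeq) × BinSeq := Prod.map shift2 shift

/-- Coordinatewise multiplication `M(x,y)` of two 0-1 sequences. -/
def Mmul : BinSeq × BinSeq → BinSeq := fun p n => p.1 n && p.2 n

/-- The map `N((w,x),y) = (1-y)·w + y·x` (coordinatewise: `x` where `y = 1`, `w` where `y = 0`). -/
def Nmap : (BinSeq × BinSeq) × BinSeq → BinSeq := fun t n => bif t.2 n then t.1.2 n else t.1.1 n

/-- The coordinatewise partial order `y ≤ x` on `{0,1}^ℤ`. -/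
def leSeq (y x : BinSeq) : Prop := ∀ n, y n ≤ x n

/-- A subshift: a closed, shift-invariant subset of `{0,1}^ℤ`. -/
def IsSubshift (X : Set BinSeq) : Prop := IsClosed X ∧ shift ⁻¹' X = X

/-- The set of `T`-invariant Borel probability measures. -/
def InvProb {α : Type*} [MeasurableSpace α] (T : α → α) : Set (Measure α) :=
  {μ | IsProbabilityMeasure μ ∧ Measure.map T μ = μ}

/-- `𝓜(X)`: shift-invariant Borel probability measures concentrated on `X`. -/
def MeasOn (X : Set BinSeq) : Set (Measure BinSeq) :=
  {μ | μ ∈ InvProb shift ∧ μ X = 1}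

/-- `𝓜(Z)` for `Z ⊆ {0,1}^ℤ × {0,1}^ℤ`. -/
def MeasOn2 (Z : Set (BinSeq × BinSeq)) : Set (Measure (BinSeq × BinSeq)) :=
  {ρ | ρ ∈ InvProb shift2 ∧ ρ Z = 1}

/-- `X` is a measure-theoretically subordinate subshift with base measure `ν`:
`𝓜(X) = {M_*(ρ) : ρ ∈ 𝓜({0,1}^ℤ × {0,1}^ℤ, σ×σ), (π₁)_*(ρ) = ν}`. -/
def Subord (X : Set BinSeq) (ν : Measure BinSeq) : Prop :=
  MeasOn X = {μ | ∃ ρ ∈ InvProb shift2,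
    Measure.map Prod.fst ρ = ν ∧ Measure.map Mmul ρ = μ}

/-- `X` is a sandwich measure-theoretically subordinate subshift with pre-base measure `ρ`:
`𝓜(X) = {N_*(κ) : κ ∈ 𝓜(({0,1}^ℤ)³), (π₁,₂)_*(κ) = ρ}`. -/
def SandwichSubord (X : Set BinSeq) (ρ : Measure (BinSeq × BinSeq)) : Prop :=
  MeasOn X = {μ | ∃ κ ∈ InvProb shift3,
    Measure.map Prod.fst κ = ρ ∧ Measure.map Nmap κ = μ}

/-- `ρ({(w,x) : w ≤ x coordinatewise}) = 1`: a pre-base measure satisfying this is a base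
measure. -/
def AboveDiag (ρ : Measure (BinSeq × BinSeq)) : Prop :=
  ρ {p : BinSeq × BinSeq | ∀ n, p.1 n ≤ p.2 n} = 1

/-- The cylinder `{x : x₀ = b}`. -/
def cylB (b : Bool) : Set BinSeq := {x : BinSeq | x 0 = b}

/-- The set `[w,x] = {σ^k y : w ≤ y ≤ x, k ∈ ℤ}`. -/
def sandwichSet (w x : BinSeq) : Set BinSeq :=
  {z | ∃ (k : ℤ) (y : BinSeq), (∀ n, w n ≤ y n) ∧ (∀ n, y n ≤ x n) ∧ z = fun n => y (n + k)}

/-- Topological entropy (base-2) of a subshift: exponential growth rate of the number of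
`n`-blocks appearing in `X`. -/
noncomputable def htop (X : Set BinSeq) : ℝ :=
  Filter.limsup (fun n : ℕ =>
    Real.logb 2
      ((Set.ncard {A : Fin n → Bool | ∃ x ∈ X, ∀ i : Fin n, x ((i : ℕ) : ℤ) = A i} : ℝ))
      / (n : ℝ)) Filter.atTop

/-- Kolmogorov–Sinai entropy (base-2) of a shift-invariant measure on `{0,1}^ℤ`,
computed via the generating partition into cylinders. -/
noncomputable def entropy (μ : Measure BinSeq) : ℝ :=
  Filter.limsup (fun n : ℕ =>
    (∑ A : Fin n → Bool,
      Real.negMulLog ((μ {x : BinSeq | ∀ i : Fin n, x ((i : ℕ) : ℤ) = A i}).toReal))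
      / ((n : ℝ) * Real.log 2)) Filter.atTop

/-- Kolmogorov–Sinai entropy (base-2) of a `σ×σ`-invariant measure on
`{0,1}^ℤ × {0,1}^ℤ`. -/
noncomputable def entropy2 (ρ : Measure (BinSeq × BinSeq)) : ℝ :=
  Filter.limsup (fun n : ℕ =>
    (∑ A : Fin n → Bool, ∑ B : Fin n → Bool,
      Real.negMulLog ((ρ {p : BinSeq × BinSeq |
        (∀ i : Fin n, p.1 ((i : ℕ) : ℤ) = A i) ∧
        (∀ i : Fin n, p.2 ((i : ℕ) : ℤ) = B i)}).toReal))
      / ((n : ℝ) * Real.log 2)) Filter.atTop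

open scoped Classical in
/-- Topological pressure (base-2) of a subshift `X` with potential `φ`:
`𝒫_{X,φ} = lim (1/n) log₂ Σ_{A ∈ ℒ_n(X)} 2^{sup_{x ∈ [A] ∩ X} φ⁽ⁿ⁾(x)}`. -/
noncomputable def pressure (X : Set BinSeq) (φ : BinSeq → ℝ) : ℝ :=
  Filter.limsup (fun n : ℕ =>
    Real.logb 2 (∑ A : Fin n → Bool,
      if ∃ x ∈ X, ∀ i : Fin n, x ((i : ℕ) : ℤ) = A i then
        (2 : ℝ) ^ sSup {r : ℝ | ∃ x ∈ X, (∀ i : Fin n, x ((i : ℕ) : ℤ) = A i) ∧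
          r = ∑ k ∈ Finset.range n, φ (shift^[k] x)}
      else 0) / (n : ℝ)) Filter.atTop

/-- Birkhoff average of a continuous function along the first `N` points of the `T`-orbit. -/
noncomputable def birkAvg {α : Type*} [TopologicalSpace α] (T : α → α) (x : α) (N : ℕ)
    (f : C(α, ℝ)) : ℝ :=
  (∑ n ∈ Finset.range N, f (T^[n] x)) / (N : ℝ)

/-- `x` is quasi-generic for `μ` along `(N i)`: the empirical measures
`(1/N_i) Σ_{n<N_i} δ_{T^n x}` converge weakly-* to `μ`. -/
def QuasiGenericAlong {α : Type*} [TopologicalSpace α] [MeasurableSpace α]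
    (T : α → α) (x : α) (N : ℕ → ℕ) (μ : Measure α) : Prop :=
  ∀ f : C(α, ℝ), Filter.Tendsto (fun i => birkAvg T x (N i) f) Filter.atTop
    (nhds (∫ y, f y ∂μ))

/-- `x` is generic for `μ`. -/
def GenericFor {α : Type*} [TopologicalSpace α] [MeasurableSpace α]
    (T : α → α) (x : α) (μ : Measure α) : Prop :=
  QuasiGenericAlong T x (fun i => i) μ

/-- Weak-* convergence of a sequence of measures. -/
def WeakTendsto {α : Type*} [TopologicalSpace α] [MeasurableSpace α]
    (μs : ℕ → Measure α) (μ : Measure α) : Prop :=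
  ∀ f : C(α, ℝ), Filter.Tendsto (fun K => ∫ y, f y ∂(μs K)) Filter.atTop
    (nhds (∫ y, f y ∂μ))

/-- `V(y)`: the invariant measures for which `y` is quasi-generic (along some
increasing sequence). -/
def Vset (y : BinSeq) : Set (Measure BinSeq) :=
  {μ | μ ∈ InvProb shift ∧ ∃ N : ℕ → ℕ, StrictMono N ∧ QuasiGenericAlong shift y N μ}

/-- `V_{(N_i)}(y)`: the invariant measures for which `y` is quasi-generic along a
subsequence of `(N_i)`. -/
def VsetAlong (N : ℕ → ℕ) (y : BinSeq) : Set (Measure BinSeq) :=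
  {μ | μ ∈ InvProb shift ∧ ∃ φ : ℕ → ℕ, StrictMono φ ∧ QuasiGenericAlong shift y (N ∘ φ) μ}

/-- `β` is the Bernoulli product measure on `{0,1}^ℤ` with `β({x : x₀ = 0}) = p`. -/
def IsBernoulli (p : ENNReal) (β : Measure BinSeq) : Prop :=
  IsProbabilityMeasure β ∧ ∀ (s : Finset ℤ) (A : ℤ → Bool),
    β {x : BinSeq | ∀ i ∈ s, x i = A i} = ∏ i ∈ s, (if A i = false then p else 1 - p)

/-- The all-zeros sequence. -/
def zeroSeq : BinSeq := fun _ => false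

lemma meas_shift : Measurable shift :=
  measurable_pi_iff.mpr fun n => measurable_pi_apply (n + 1)

lemma meas_shift2 : Measurable shift2 := meas_shift.prodMap meas_shift

lemma meas_shift3 : Measurable shift3 := meas_shift2.prodMap meas_shift

lemma meas_Mmul : Measurable Mmul := by
  apply measurable_pi_iff.mpr
  intro n
  have h : Measurable (fun p : BinSeq × BinSeq => (p.1 n, p.2 n)) :=
    ((measurable_pi_apply n).comp measurable_fst).prodMk
      ((measurable_pi_apply n).comp measurable_snd)
  exact (measurable_of_countable (fun q : Bool × Bool => q.1 && q.2)).comp h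

lemma meas_Nmap : Measurable Nmap := by
  apply measurable_pi_iff.mpr
  intro n
  have h : Measurable (fun t : (BinSeq × BinSeq) × BinSeq => (t.2 n, (t.1.2 n, t.1.1 n))) :=
    ((measurable_pi_apply n).comp measurable_snd).prodMk
      ((((measurable_pi_apply n).comp measurable_snd).comp measurable_fst).prodMk
        (((measurable_pi_apply n).comp measurable_fst).comp measurable_fst))
  exact (measurable_of_countable
      (fun q : Bool × Bool × Bool => bif q.1 then q.2.1 else q.2.2)).comp h

/-- `g ((w,x),y) = (x,y)`. -/
def gmap : (BinSeq × BinSeq) × BinSeq → BinSeq × BinSeq := fun t => (t.1.2, t.2)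

lemma meas_gmap : Measurable gmap :=
  (measurable_snd.comp measurable_fst).prodMk measurable_snd

/-- `e (x,y) = ((0,x),y)`. -/
def emap : BinSeq × BinSeq → (BinSeq × BinSeq) × BinSeq :=
  fun p => ((zeroSeq, p.1), p.2)

lemma meas_emap : Measurable emap :=
  (measurable_const.prodMk measurable_fst).prodMk measurable_snd

lemma meas_singleton_zero : MeasurableSet ({zeroSeq} : Set BinSeq) := by
  have : ({zeroSeq} : Set BinSeq) = ⋂ n : ℤ, {x : BinSeq | x n = false} := by
    ext x
    simp only [Set.mem_singleton_iff, Set.mem_iInter, Set.mem_setOf_eq]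
    constructor
    · rintro rfl n; rfl
    · intro h; funext n; exact h n
  rw [this]
  refine MeasurableSet.iInter fun n => ?_
  have : {x : BinSeq | x n = false} = (fun x : BinSeq => x n) ⁻¹' {false} := rfl
  rw [this]
  exact (measurable_pi_apply n) (measurableSet_singleton false)

/-- A measure-theoretically subordinate subshift `X` with base measure `ν` is
a sandwich measure-theoretically subordinate subshift with base measure `δ_𝟎 ⊗ ν`. -/
theorem stmt6 (X : Set BinSeq) (ν : Measure BinSeq)
    (hX : IsSubshift X) (hν : ν ∈ InvProb shift) (hsub : Subord X ν) :
    SandwichSubord X ((Measure.dirac ((fun _ => false) : BinSeq)).prod ν) ∧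
    AboveDiag ((Measure.dirac ((fun _ => false) : BinSeq)).prod ν) := by
  have hν1 : IsProbabilityMeasure ν := hν.1
  have hz : ((fun _ => false) : BinSeq) = zeroSeq := rfl
  constructor
  · unfold SandwichSubord
    rw [hsub]
    ext μ
    simp only [Set.mem_setOf_eq]
    constructor
    · -- from ρ build κ = e_* ρ
      rintro ⟨ρ, hρinv, hρfst, hρM⟩
      have hρ1 : IsProbabilityMeasure ρ := hρinv.1
      refine ⟨ρ.map emap, ⟨Measure.isProbabilityMeasure_map meas_emap.aemeasurable, ?_⟩, ?_, ?_⟩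
      · -- invariance
        rw [Measure.map_map meas_shift3 meas_emap]
        have hcomm : shift3 ∘ emap = emap ∘ shift2 := by
          funext p
          rfl
        rw [hcomm, ← Measure.map_map meas_emap meas_shift2, hρinv.2]
      · -- first marginal
        rw [Measure.map_map measurable_fst meas_emap]
        have : (Prod.fst ∘ emap) = (Prod.mk zeroSeq) ∘ Prod.fst := rfl
        rw [this, ← Measure.map_map measurable_prodMk_left measurable_fst, hρfst,
          hz, ← Measure.dirac_prod]
      · -- Nmap pushforward
        rw [Measure.map_map meas_Nmap meas_emap]
        have : (Nmap ∘ emap) = Mmul := by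
          funext p n
          show (bif p.2 n then p.1 n else false) = (p.1 n && p.2 n)
          cases p.1 n <;> cases p.2 n <;> rfl
        rw [this, hρM]
    · -- from κ build ρ = g_* κ
      rintro ⟨κ, hκinv, hκfst, hκN⟩
      have hκ1 : IsProbabilityMeasure κ := hκinv.1
      -- a.e. the first coordinate is zeroSeq
      have hZmeas : MeasurableSet {t : (BinSeq × BinSeq) × BinSeq | t.1.1 = zeroSeq} := by
        have : {t : (BinSeq × BinSeq) × BinSeq | t.1.1 = zeroSeq}
            = (fun t : (BinSeq × BinSeq) × BinSeq => t.1.1) ⁻¹' {zeroSeq} := rfl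
        rw [this]
        exact (measurable_fst.comp measurable_fst) meas_singleton_zero
      have hZ1 : κ {t : (BinSeq × BinSeq) × BinSeq | t.1.1 = zeroSeq} = 1 := by
        have hpre : {t : (BinSeq × BinSeq) × BinSeq | t.1.1 = zeroSeq}
            = Prod.fst ⁻¹' {p : BinSeq × BinSeq | p.1 = zeroSeq} := rfl
        have hmeas : MeasurableSet {p : BinSeq × BinSeq | p.1 = zeroSeq} := by
          have : {p : BinSeq × BinSeq | p.1 = zeroSeq} = Prod.fst ⁻¹' {zeroSeq} := rfl
          rw [this]; exact measurable_fst meas_singleton_zero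
        rw [hpre, ← Measure.map_apply measurable_fst hmeas, hκfst, hz, Measure.dirac_prod,
          Measure.map_apply measurable_prodMk_left hmeas]
        have : (Prod.mk zeroSeq) ⁻¹' {p : BinSeq × BinSeq | p.1 = zeroSeq} = Set.univ := by
          ext x; simp [zeroSeq]
        rw [this]
        exact measure_univ
      have hae : ∀ᵐ t ∂κ, t.1.1 = zeroSeq := by
        rw [MeasureTheory.ae_iff]
        have := measure_compl hZmeas (measure_ne_top κ _)
        rw [hZ1, measure_univ] at this
        simpa [Set.compl_setOf] using this
      refine ⟨κ.map gmap, ⟨Measure.isProbabilityMeasure_map meas_gmap.aemeasurable, ?_⟩, ?_, ?_⟩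
      · rw [Measure.map_map meas_shift2 meas_gmap]
        have hcomm : shift2 ∘ gmap = gmap ∘ shift3 := by
          funext t
          rfl
        rw [hcomm, ← Measure.map_map meas_gmap meas_shift3, hκinv.2]
      · rw [Measure.map_map measurable_fst meas_gmap]
        have : (Prod.fst ∘ gmap) = Prod.snd ∘ (Prod.fst :
            (BinSeq × BinSeq) × BinSeq → BinSeq × BinSeq) := rfl
        rw [this, ← Measure.map_map measurable_snd measurable_fst, hκfst, hz]
        simp [Measure.map_snd_prod]
      · rw [Measure.map_map meas_Mmul meas_gmap]
        have hcong : (Mmul ∘ gmap) =ᵐ[κ] Nmap := by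
          filter_upwards [hae] with t ht
          funext n
          show (t.1.2 n && t.2 n) = (bif t.2 n then t.1.2 n else t.1.1 n)
          rw [ht]
          show (t.1.2 n && t.2 n) = (bif t.2 n then t.1.2 n else false)
          cases t.1.2 n <;> cases t.2 n <;> rfl
        rw [Measure.map_congr hcong, hκN]
  · -- AboveDiag
    unfold AboveDiag
    have hS : MeasurableSet {p : BinSeq × BinSeq | ∀ n : ℤ, p.1 n ≤ p.2 n} := by
      have : {p : BinSeq × BinSeq | ∀ n : ℤ, p.1 n ≤ p.2 n}
          = ⋂ n : ℤ, {p : BinSeq × BinSeq | p.1 n ≤ p.2 n} := by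
        ext p; simp
      rw [this]
      refine MeasurableSet.iInter fun n => ?_
      have : {p : BinSeq × BinSeq | p.1 n ≤ p.2 n}
          = (fun p : BinSeq × BinSeq => (p.1 n, p.2 n)) ⁻¹' {q : Bool × Bool | q.1 ≤ q.2} := rfl
      rw [this]
      exact (((measurable_pi_apply n).comp measurable_fst).prodMk
        ((measurable_pi_apply n).comp measurable_snd))
        ((Set.to_countable _).measurableSet)
    rw [hz, Measure.dirac_prod, Measure.map_apply measurable_prodMk_left hS]
    have : (Prod.mk zeroSeq) ⁻¹' {p : BinSeq × BinSeq | ∀ n : ℤ, p.1 n ≤ p.2 n}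
        = Set.univ := by
      ext x
      simp [zeroSeq, Bool.false_le]
    rw [this]
    exact measure_univ
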